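/- arXiv:1508.07553 — 4 statements merged into one kernel-verified Lean document; each statement's English description precedes it below -/
import Mathlib

section
/- Let G be a countable group, A a finite set, Δ ⊂ G a finite subset, and Σ ⊂ A^G a Δ-irreducible subshift. Let Φ(u, F) denote the set of configurations in Σ that agree with a fixed u ∈ Σ outside FΔ. Then for every finite subset F ⊂ G, card(Φ(u, F)) ≥ card(π_F(Σ)), where π_F : A^G → A^F is the restriction map. -/
open Pointwise

/-- Let `Σ ⊆ A^G` be a `Δ`-irreducible subshift (with the infinite-set gluing property:
for any subsets `Ω₁, Ω₂ ⊆ G` with `Ω₁Δ ∩ Ω₂ = ∅` and any `u₁, u₂ ∈ Σ` there is `w ∈ Σ`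
agreeing with `u₁` on `Ω₁` and with `u₂` on `Ω₂`).  For `u ∈ Σ` and a finite `F ⊆ G`,
let `Φ(u, F)` be the set of configurations of `Σ` agreeing with `u` outside `FΔ`.
Then `card (Φ(u, F)) ≥ card (π_F(Σ))`, where `π_F` is the restriction map to `F`. -/
theorem card_phi_ge_card_restriction {G A : Type*} [Group G] [Countable G] [Finite A]
    [TopologicalSpace A] [DiscreteTopology A] [DecidableEq G]
    (S : Set (G → A)) (hclosed : IsClosed S)
    (hinv : ∀ (g : G), ∀ u ∈ S, (fun h => u (g⁻¹ * h)) ∈ S)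
    (Δ : Finset G)
    (hirr : ∀ Ω₁ Ω₂ : Set G, Disjoint (Ω₁ * (Δ : Set G)) Ω₂ →
      ∀ u₁ ∈ S, ∀ u₂ ∈ S, ∃ w ∈ S, (∀ g ∈ Ω₁, w g = u₁ g) ∧ (∀ g ∈ Ω₂, w g = u₂ g))
    (u : G → A) (hu : u ∈ S) (F : Finset G) :
    Nat.card ((fun v : G → A => fun g : F => v (g : G)) '' S) ≤
      Nat.card {v ∈ S | ∀ g : G, g ∉ F * Δ → v g = u g} := by
  classical
  set Φ : Set (G → A) := {v ∈ S | ∀ g : G, g ∉ F * Δ → v g = u g} with hΦdef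
  have hΦfin : Finite Φ := by
    have hinj : Function.Injective
        (fun v : Φ => fun g : (F * Δ : Finset G) => (v : G → A) (g : G)) := by
      intro v w h
      apply Subtype.ext
      funext g
      by_cases hg : g ∈ F * Δ
      · exact congrFun h ⟨g, hg⟩
      · rw [v.2.2 g hg, w.2.2 g hg]
    exact Finite.of_injective _ hinj
  have key : ∀ p : ((fun v : G → A => fun g : F => v (g : G)) '' S),
      ∃ w : Φ, ∀ g : F, (w : G → A) (g : G) = (p : F → A) g := by
    rintro ⟨p, v, hv, rfl⟩
    have hdisj : Disjoint ((F : Set G) * (Δ : Set G)) (((F * Δ : Finset G) : Set G))ᶜ := by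
      rw [← Finset.coe_mul]
      exact disjoint_compl_right
    obtain ⟨w, hwS, hw1, hw2⟩ := hirr (F : Set G) (((F * Δ : Finset G) : Set G))ᶜ hdisj v hv u hu
    refine ⟨⟨w, hwS, fun g hg => hw2 g (fun hmem => hg (by exact_mod_cast hmem))⟩, fun g => hw1 g g.2⟩
  choose f hf using key
  have hfinj : Function.Injective f := by
    intro p q h
    apply Subtype.ext
    obtain ⟨p, vp, hvp, rfl⟩ := p
    obtain ⟨q, vq, hvq, rfl⟩ := q
    funext g
    rw [← hf ⟨_, vp, hvp, rfl⟩ g, ← hf ⟨_, vq, hvq, rfl⟩ g, h]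
  exact Nat.card_le_card_of_injective f hfinj
end

section
/- Let G be a countable group, A a finite set, and Σ ⊂ A^G an infinite strongly irreducible subshift (with the infinite-set gluing property). Then every G-homoclinicity class in Σ is infinite; equivalently, for every u ∈ Σ, the set of configurations in Σ almost equal to u is infinite. -/
open Pointwise

/-- Let `G` be a countable group, `A` a finite set, and `Σ ⊆ A^G` an infinite strongly
irreducible subshift (with the infinite-set gluing property: there is a finite `Δ ⊆ G`
such that for any `Ω₁, Ω₂ ⊆ G` with `Ω₁Δ ∩ Ω₂ = ∅` and any `u₁, u₂ ∈ Σ` there is `w ∈ Σ`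
agreeing with `u₁` on `Ω₁` and with `u₂` on `Ω₂`).  Then every `G`-homoclinicity class of
`Σ` is infinite: for every `u ∈ Σ`, the set of configurations of `Σ` almost equal to `u`
(i.e. coinciding with `u` outside a finite set) is infinite. -/
theorem homoclinicity_class_infinite {G A : Type*} [Group G] [Countable G] [Finite A]
    [TopologicalSpace A] [DiscreteTopology A]
    (S : Set (G → A)) (hclosed : IsClosed S)
    (hinv : ∀ (g : G), ∀ u ∈ S, (fun h => u (g⁻¹ * h)) ∈ S)
    (hinf : S.Infinite)
    (Δ : Finset G)
    (hirr : ∀ Ω₁ Ω₂ : Set G, Disjoint (Ω₁ * (Δ : Set G)) Ω₂ →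
      ∀ u₁ ∈ S, ∀ u₂ ∈ S, ∃ w ∈ S, (∀ g ∈ Ω₁, w g = u₁ g) ∧ (∀ g ∈ Ω₂, w g = u₂ g))
    (u : G → A) (hu : u ∈ S) :
    {v ∈ S | {g : G | v g ≠ u g}.Finite}.Infinite := by
  classical
  by_contra hfin'
  rw [Set.not_infinite] at hfin'
  obtain ⟨T, hTS, hTcard⟩ := hinf.exists_subset_card_eq (hfin'.toFinset.card + 1)
  -- separating points
  set s : (G → A) → (G → A) → G := fun a b =>
    if h : a ≠ b then (Function.ne_iff.mp h).choose else 1 with hsdef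
  have hs : ∀ a b : G → A, a ≠ b → a (s a b) ≠ b (s a b) := by
    intro a b h
    simp only [hsdef, dif_pos h]
    exact (Function.ne_iff.mp h).choose_spec
  set F : Set G := ⋃ a ∈ (T : Set (G → A)), ⋃ b ∈ (T : Set (G → A)), {s a b} with hF
  have hFfin : F.Finite :=
    T.finite_toSet.biUnion fun a _ => T.finite_toSet.biUnion fun b _ => Set.finite_singleton _
  have hdis : Disjoint ((F * (↑Δ : Set G)⁻¹)ᶜ * (↑Δ : Set G)) F := by
    rw [Set.disjoint_left]
    rintro x hx hxF
    obtain ⟨y, hy, d, hd, rfl⟩ := hx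
    exact hy ⟨y * d, hxF, d⁻¹, Set.inv_mem_inv.mpr hd, by group⟩
  have hglue : ∀ v : G → A, ∃ w, v ∈ T →
      (w ∈ S ∧ (∀ g ∈ F, w g = v g) ∧ {g | w g ≠ u g}.Finite) := by
    intro v
    by_cases hv : v ∈ T
    · obtain ⟨w, hwS, hw1, hw2⟩ :=
        hirr ((F * (↑Δ : Set G)⁻¹)ᶜ) F hdis u hu v (hTS hv)
      refine ⟨w, fun _ => ⟨hwS, hw2, ?_⟩⟩
      apply (hFfin.mul (Δ.finite_toSet.inv)).subset
      intro g hg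
      by_contra hgm
      exact hg (hw1 g hgm)
    · exact ⟨u, fun h => absurd h hv⟩
  choose w hw using hglue
  have hinj : Set.InjOn w (T : Set (G → A)) := by
    intro a ha b hb hab
    by_contra hne
    have hgab : s a b ∈ F := by
      refine Set.mem_biUnion ha (Set.mem_biUnion hb rfl)
    have h1 := (hw a ha).2.1 _ hgab
    have h2 := (hw b hb).2.1 _ hgab
    exact hs a b hne (by rw [← h1, ← h2, hab])
  have hmaps : ∀ v ∈ T, w v ∈ hfin'.toFinset := by
    intro v hv
    rw [Set.Finite.mem_toFinset]
    exact ⟨(hw v hv).1, (hw v hv).2.2⟩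
  have hle := Finset.card_le_card_of_injOn w hmaps hinj
  omega
end

section
/- Let X be a compact metrizable space with an expansive continuous action of a countable group G such that the set of periodic points Per(X,G) is dense in X. Then every injective continuous G-equivariant map τ : X → X is surjective. -/
/-- A `δ`-separated subset of a compact metric space is finite. -/
lemma finite_of_separated_aux {Y : Type*} [MetricSpace Y] [CompactSpace Y] {s : Set Y} {δ : ℝ}
    (hδ : 0 < δ) (h : ∀ y ∈ s, ∀ z ∈ s, y ≠ z → δ ≤ dist y z) : s.Finite := by
  have htb : TotallyBounded s := isCompact_univ.totallyBounded.subset (Set.subset_univ s)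
  obtain ⟨t, htf, hst⟩ := Metric.totallyBounded_iff.mp htb (δ / 2) (by linarith)
  have key : ∀ y : s, ∃ c ∈ t, (y : Y) ∈ Metric.ball c (δ / 2) := by
    intro y
    simpa using hst y.2
  choose c hc hbc using key
  haveI : Finite t := htf.to_subtype
  have hinj : Function.Injective (fun y : s => (⟨c y, hc y⟩ : t)) := by
    intro y z hyz
    by_contra hne
    have hne' : (y : Y) ≠ (z : Y) := fun h' => hne (Subtype.ext h')
    have hδd := h y y.2 z z.2 hne'
    have d1 := Metric.mem_ball.mp (hbc y)
    have d2 := Metric.mem_ball.mp (hbc z)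
    have hcc : c y = c z := congrArg Subtype.val hyz
    have htri : dist (y : Y) (z : Y) ≤ dist (y : Y) (c y) + dist (c y) (z : Y) :=
      dist_triangle _ _ _
    have d2' : dist (c y) (z : Y) < δ / 2 := by rw [hcc, dist_comm]; exact d2
    linarith
  have : Finite s := Finite.of_injective _ hinj
  exact Set.finite_coe_iff.mp this

/-- Let `X` be a compact metrizable space with an expansive continuous action of a
countable group `G` such that the set of periodic points (points with finite orbit)
is dense in `X`.  Then every injective continuous `G`-equivariant map `τ : X → X`
is surjective. -/
theorem surjunctive_of_expansive_dense_periodic {G X : Type*} [Group G] [Countable G]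
    [MetricSpace X] [CompactSpace X] [MulAction G X]
    (hcont : ∀ g : G, Continuous fun x : X => g • x)
    (hexp : ∃ δ > (0 : ℝ), ∀ x y : X, x ≠ y → ∃ g : G, δ ≤ dist (g • x) (g • y))
    (hdense : Dense {x : X | (MulAction.orbit G x).Finite})
    (τ : X → X) (hτc : Continuous τ) (hτinj : Function.Injective τ)
    (hτeq : ∀ (g : G) (x : X), τ (g • x) = g • τ x) :
    Function.Surjective τ := by
  obtain ⟨δ, hδ, hsep⟩ := hexp
  have hclosed : IsClosed (Set.range τ) := (isCompact_range hτc).isClosed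
  have hsub : {x : X | (MulAction.orbit G x).Finite} ⊆ Set.range τ := by
    intro x hx
    set H := MulAction.stabilizer G x with hH
    haveI : Finite (MulAction.orbit G x) := hx.to_subtype
    haveI : Finite (G ⧸ H) :=
      Finite.of_equiv _ (MulAction.orbitEquivQuotientStabilizer G x)
    haveI := Fintype.ofFinite (G ⧸ H)
    set S : Set X := {y | ∀ h : G, h ∈ H → h • y = y} with hS
    have hxS : x ∈ S := fun h hh => hh
    have hmaps : Set.MapsTo τ S S := by
      intro y hy h hh
      rw [← hτeq, hy h hh]
    -- the evaluation map along coset representatives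
    set F : X → (G ⧸ H → X) := fun y q => (Quotient.out q) • y with hF
    have hFsep : ∀ y ∈ S, ∀ z ∈ S, y ≠ z → δ ≤ dist (F y) (F z) := by
      intro y hy z hz hne
      obtain ⟨g, hg⟩ := hsep y z hne
      set q : G ⧸ H := QuotientGroup.mk g with hq
      have hout : ∀ w ∈ S, g • w = Quotient.out q • w := by
        intro w hw
        have hmem : (Quotient.out q)⁻¹ * g ∈ H := by
          rw [← QuotientGroup.eq]
          exact QuotientGroup.out_eq' q
        calc g • w = (Quotient.out q * ((Quotient.out q)⁻¹ * g)) • w := by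
              rw [← mul_assoc, mul_inv_cancel, one_mul]
          _ = Quotient.out q • (((Quotient.out q)⁻¹ * g) • w) := mul_smul _ _ _
          _ = Quotient.out q • w := by rw [hw _ hmem]
      have h1 : δ ≤ dist (F y q) (F z q) := by
        simpa [hF, ← hout y hy, ← hout z hz] using hg
      exact h1.trans (dist_le_pi_dist (F y) (F z) q)
    have hFinjOn : Set.InjOn F S := by
      intro y hy z hz hFyz
      by_contra hne
      have := hFsep y hy z hz hne
      rw [hFyz, dist_self] at this
      linarith
    have hFimg : (F '' S).Finite := by
      apply finite_of_separated_aux hδ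
      rintro _ ⟨y, hy, rfl⟩ _ ⟨z, hz, rfl⟩ hne
      exact hFsep y hy z hz (fun h' => hne (by rw [h']))
    have hSfin : S.Finite := hFimg.of_finite_image hFinjOn
    have hbij : Set.BijOn τ S S :=
      (hSfin.injOn_iff_bijOn_of_mapsTo hmaps).mp (hτinj.injOn)
    obtain ⟨y, _, hyx⟩ := hbij.surjOn hxS
    exact ⟨y, hyx⟩
  have hdr : Dense (Set.range τ) := hdense.mono hsub
  have : Set.range τ = Set.univ := by
    rw [← hclosed.closure_eq]
    exact hdr.closure_eq
  exact Set.range_eq_univ.mp this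
end

section
/- Let G be a countable group containing a finite-index subgroup H, let A be a finite set, Ω ⊂ G a finite symmetric window with 1 ∈ Ω, and Σ ⊂ A^G the SFT determined by Ω and P ⊂ A^Ω. Let E ⊂ G be finite, suppose the translates hEΩ², h ∈ H, are pairwise disjoint, and suppose v ∈ Σ is fixed by H. If u₀, u₁ ∈ Σ agree with each other on G \ E, and v agrees with u₀ on EΩ², then for every z : H → {0,1} the configuration w_z defined by w_z(g) = u_{z(h)}(h⁻¹g) if g ∈ hEΩ² for the unique such h ∈ H, and w_z(g) = v(g) otherwise, belongs to Σ. -/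
open Pointwise

/-- The key construction of Proposition 4.8:  let `Σ ⊆ A^G` be the SFT with symmetric
window `Ω ∋ 1` and patterns `P`, `H ≤ G` a finite-index subgroup, and `E ⊆ G` finite.
Assume the translates `h • EΩ²` (`h ∈ H`) are pairwise disjoint, `v ∈ Σ` is fixed by `H`,
`u₀, u₁ ∈ Σ` agree on `G \ E`, and `v` agrees with `u₀` on `EΩ²`.  Then for every
`z : H → {0,1}`, the configuration `w_z` defined by `w_z g = u_{z h} (h⁻¹ g)` if
`g ∈ h • EΩ²` for the (unique) `h ∈ H`, and `w_z g = v g` otherwise, belongs to `Σ`. -/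
theorem sft_mixing_construction {G A : Type*} [Group G] [Countable G] [Finite A]
    [DecidableEq G]
    (H : Subgroup G) (hH : H.FiniteIndex)
    (Ω : Finset G) (hΩ1 : (1 : G) ∈ Ω) (hΩsymm : ∀ ω ∈ Ω, ω⁻¹ ∈ Ω)
    (P : Set (Ω → A))
    (E : Finset G)
    (hdisj : ∀ h₁ h₂ : H, h₁ ≠ h₂ →
      Disjoint ((h₁ : G) • ((E * Ω * Ω : Finset G) : Set G))
        ((h₂ : G) • ((E * Ω * Ω : Finset G) : Set G)))
    (v : G → A) (hv : ∀ g : G, (fun ω : Ω => v (g⁻¹ * (ω : G))) ∈ P)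
    (hvfix : ∀ h : H, ∀ g : G, v ((h : G)⁻¹ * g) = v g)
    (u : Fin 2 → G → A) (hu : ∀ i, ∀ g : G, (fun ω : Ω => u i (g⁻¹ * (ω : G))) ∈ P)
    (huagree : ∀ g : G, g ∉ E → u 0 g = u 1 g)
    (hvu : ∀ g ∈ (E * Ω * Ω : Finset G), v g = u 0 g)
    (z : H → Fin 2) (w : G → A)
    (hw1 : ∀ h : H, ∀ g ∈ (E * Ω * Ω : Finset G), w ((h : G) * g) = u (z h) g)
    (hw2 : ∀ g : G, (∀ h : H, (h : G)⁻¹ * g ∉ (E * Ω * Ω : Finset G)) → w g = v g) :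
    ∀ g : G, (fun ω : Ω => w (g⁻¹ * (ω : G))) ∈ P := by
  classical
  intro g
  by_cases hA : ∃ h : H, (h : G)⁻¹ * g⁻¹ ∈ (E * Ω : Finset G)
  · obtain ⟨h, hh⟩ := hA
    have key : ∀ ω : Ω, w (g⁻¹ * (ω : G)) = u (z h) ((g * (h : G))⁻¹ * (ω : G)) := by
      intro ω
      have hmem : (h : G)⁻¹ * g⁻¹ * (ω : G) ∈ (E * Ω * Ω : Finset G) :=
        Finset.mul_mem_mul hh ω.2
      have h1 := hw1 h _ hmem
      rw [show (h : G) * ((h : G)⁻¹ * g⁻¹ * (ω : G)) = g⁻¹ * (ω : G) by group] at h1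
      rw [h1]
      congr 1
      group
    simp only [key]
    exact hu (z h) (g * (h : G))
  · have key : ∀ ω : Ω, w (g⁻¹ * (ω : G)) = v (g⁻¹ * (ω : G)) := by
      intro ω
      by_cases hB : ∃ h : H, (h : G)⁻¹ * (g⁻¹ * (ω : G)) ∈ (E * Ω * Ω : Finset G)
      · obtain ⟨h, hh⟩ := hB
        set x := (h : G)⁻¹ * (g⁻¹ * (ω : G)) with hxdef
        have hx : x ∉ E := by
          intro hxE
          apply hA
          refine ⟨h, ?_⟩
          rw [show (h : G)⁻¹ * g⁻¹ = x * (ω : G)⁻¹ by rw [hxdef]; group]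
          exact Finset.mul_mem_mul hxE (hΩsymm ω ω.2)
        have h1 : w (g⁻¹ * (ω : G)) = u (z h) x := by
          have h1 := hw1 h x hh
          rwa [show (h : G) * x = g⁻¹ * (ω : G) by rw [hxdef]; group] at h1
        have h2 : ∀ i : Fin 2, u i x = u 0 x := by
          intro i
          fin_cases i
          · rfl
          · exact (huagree x hx).symm
        have h3 : u 0 x = v x := (hvu x hh).symm
        have h4 : v x = v (g⁻¹ * (ω : G)) := hvfix h (g⁻¹ * (ω : G))
        rw [h1, h2, h3, h4]
      · push_neg at hB
        exact hw2 _ hB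
    simp only [key]
    exact hv g
end
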